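/- Let (G,𝒳,k) be a Yes-instance of EDP where G is a split graph with split partition (C, I), let 𝒫 be a minimum solution of (G,𝒳,k), let P ∈ 𝒫, and let v_1,…,v_ℓ be the vertices of V(P) ∩ C listed in the order in which they occur along P. Then for all i, j ∈ {1,…,ℓ} with j ≥ i+2, the edge v_i v_j of G is used by some path in 𝒫 \ {P}. -/

import Mathlib

open SimpleGraph Finset

/-- A family of walks in `G` connecting the terminal pairs `X`. -/
abbrev WalkFamily {V : Type*} (G : SimpleGraph V) {ι : Type*} (X : ι → V × V) :=
  ∀ i : ι, G.Walk (X i).1 (X i).2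

/-- The walks in the family are pairwise edge-disjoint. -/
def PairwiseEdgeDisjoint {V : Type*} (G : SimpleGraph V) {ι : Type*} (X : ι → V × V)
    (P : WalkFamily G X) : Prop :=
  ∀ i j : ι, i ≠ j → ∀ e : Sym2 V, e ∈ (P i).edges → e ∉ (P j).edges

/-- A solution of the Edge-Disjoint Paths (EDP) instance `(G, X)`: a family of paths
connecting the terminal pairs that are pairwise edge-disjoint. -/
def IsEDPSolution {V : Type*} (G : SimpleGraph V) {ι : Type*} (X : ι → V × V)
    (P : WalkFamily G X) : Prop :=
  (∀ i, (P i).IsPath) ∧ PairwiseEdgeDisjoint G X P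

/-- `(G, X)` is a Yes-instance of EDP. -/
def EDPYes {V : Type*} (G : SimpleGraph V) {ι : Type*} (X : ι → V × V) : Prop :=
  ∃ P : WalkFamily G X, IsEDPSolution G X P

/-- A minimum solution of the EDP instance `(G, X)`: a solution minimizing the total
number of edges of the paths. -/
def IsMinEDPSolution {V : Type*} (G : SimpleGraph V) {ι : Type*} [Fintype ι]
    (X : ι → V × V) (P : WalkFamily G X) : Prop :=
  IsEDPSolution G X P ∧
    ∀ Q : WalkFamily G X, IsEDPSolution G X Q →
      ∑ i, (P i).length ≤ ∑ i, (Q i).length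

/-- `(C, I)` is a split partition of `G`: `V(G)` is the disjoint union of `C` and `I`,
`C` induces a clique, and `I` is an independent set. -/
def IsSplitPartition {V : Type*} (G : SimpleGraph V) (C I : Finset V) : Prop :=
  (∀ x : V, x ∈ C ∨ x ∈ I) ∧ (∀ x : V, ¬ (x ∈ C ∧ x ∈ I)) ∧
  (∀ x ∈ C, ∀ y ∈ C, x ≠ y → G.Adj x y) ∧ (∀ x ∈ I, ∀ y ∈ I, ¬ G.Adj x y)

lemma index_eq_of_decomp {α : Type*} {l X Y : List α} {x : α}
    (h : l = X ++ x :: Y) (hn : l.Nodup) {i : ℕ} (hi : i < l.length)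
    (hx : l[i] = x) : i = X.length := by
  have hlen : X.length < l.length := by subst h; simp [List.length_append]
  have h2 : l[X.length]'hlen = x := by
    subst h
    rw [List.getElem_append_right (le_refl _)]
    simp
  exact hn.getElem_inj_iff.mp (hx.trans h2.symm)

/-- Let `P i₀` be a path of a minimum EDP solution on a split graph and let
`L` be the list of clique vertices of `P i₀` in the order in which they occur along it.
Then every "shortcut" edge `L[a] L[b]` with `b ≥ a + 2` is used by some other path of the
solution. -/
theorem min_edp_solution_shortcut_used {V : Type*} [Fintype V] [DecidableEq V]
    (G : SimpleGraph V)
    (C I : Finset V) (hsplit : IsSplitPartition G C I)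
    {k : ℕ} (X : Fin k → V × V) (hX : ∀ i, (X i).1 ≠ (X i).2)
    (P : WalkFamily G X) (hP : IsMinEDPSolution G X P)
    (i₀ : Fin k)
    (L : List V) (hL : L = (P i₀).support.filter (fun y => decide (y ∈ C)))
    (a b : ℕ) (hab : a + 2 ≤ b) (hb : b < L.length) :
    ∃ j : Fin k, j ≠ i₀ ∧
      Sym2.mk (L[a]'(by omega)) (L[b]'hb) ∈ (P j).edges := by
  by_contra hcon
  push_neg at hcon
  set w := P i₀ with hw
  have hwpath : w.IsPath := hP.1.1 i₀
  have hnd : w.support.Nodup := hwpath.support_nodup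
  set p : V → Bool := fun y => decide (y ∈ C) with hp
  have hLnd : L.Nodup := by rw [hL]; exact hnd.filter _
  have ha' : a < L.length := by omega
  set va := L[a]'ha' with hva_def
  set vb := L[b]'hb with hvb_def
  have haL : va ∈ L := by rw [hva_def]; exact L.getElem_mem ha'
  have hbL : vb ∈ L := by rw [hvb_def]; exact L.getElem_mem hb
  have hmemC : ∀ x ∈ L, x ∈ w.support ∧ x ∈ C := by
    intro x hx
    rw [hL] at hx
    have h2 := List.mem_filter.mp hx
    exact ⟨h2.1, by simpa [hp] using h2.2⟩
  have hvaS : va ∈ w.support := (hmemC va haL).1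
  have hvaC : va ∈ C := (hmemC va haL).2
  have hvbC : vb ∈ C := (hmemC vb hbL).2
  have hne : va ≠ vb := by
    intro h
    have : a = b := hLnd.getElem_inj_iff.mp (by rw [← hva_def, ← hvb_def, h])
    omega
  set w1 := w.takeUntil va hvaS with hw1
  set w2 := w.dropUntil va hvaS with hw2
  have hspec : w1.append w2 = w := w.take_spec hvaS
  have hsup : w.support = w1.support ++ w2.support.tail := by
    rw [← hspec, Walk.support_append]
  have hw1p : w1.IsPath := hwpath.takeUntil hvaS
  have hw2p : w2.IsPath := hwpath.dropUntil hvaS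
  -- decompose w1.support
  have hw1ne : w1.support ≠ [] := w1.support_ne_nil
  set A' := w1.support.dropLast with hA'def
  have hA' : w1.support = A' ++ [va] := by
    conv_lhs => rw [← List.dropLast_append_getLast hw1ne]
    rw [w1.getLast_support]
  have hpva : p va = true := by simp [hp, hvaC]
  have hpvb : p vb = true := by simp [hp, hvbC]
  have hLdec1 : L = A'.filter p ++ va :: w2.support.tail.filter p := by
    rw [hL, hsup, hA']
    simp [List.filter_append, hpva]
    conv_lhs => rw [w2.support_eq_cons]
    rw [List.filter_cons_of_pos hpva]
  have ha_eq : a = (A'.filter p).length :=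
    index_eq_of_decomp hLdec1 hLnd ha' hva_def.symm
  -- vb is in the second part
  have hb2 : b - (a + 1) < (w2.support.tail.filter p).length := by
    have := hb
    rw [hLdec1] at this
    simp only [List.length_append, List.length_cons] at this
    omega
  have hvb_get : vb = (w2.support.tail.filter p)[b - (a + 1)]'hb2 := by
    rw [hvb_def, List.getElem_of_eq hLdec1 hb]
    have hlen : (A'.filter p ++ [va]).length ≤ b := by simp; omega
    have h1 : A'.filter p ++ va :: w2.support.tail.filter p
        = (A'.filter p ++ [va]) ++ w2.support.tail.filter p := by simp
    rw [List.getElem_of_eq h1, List.getElem_append_right hlen]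
    congr 1
    simp
    omega
  have hvbT : vb ∈ w2.support.tail := by
    have : vb ∈ w2.support.tail.filter p := by rw [hvb_get]; exact List.getElem_mem _
    exact (List.mem_filter.mp this).1
  have hvbS : vb ∈ w2.support := List.mem_of_mem_tail hvbT
  set w2t := w2.takeUntil vb hvbS with hw2t
  set w3 := w2.dropUntil vb hvbS with hw3
  have hspec2 : w2t.append w3 = w2 := w2.take_spec hvbS
  have hsup2 : w2.support = w2t.support ++ w3.support.tail := by
    rw [← hspec2, Walk.support_append]
  have hw2tp : w2t.IsPath := hw2p.takeUntil hvbS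
  have hw3p : w3.IsPath := hw2p.dropUntil hvbS
  -- decompose w2t.support
  have h2tne : w2t.support ≠ [] := w2t.support_ne_nil
  have hD : w2t.support = w2t.support.dropLast ++ [vb] := by
    conv_lhs => rw [← List.dropLast_append_getLast h2tne]
    rw [w2t.getLast_support]
  have hhead : w2t.support = va :: w2t.support.tail := w2t.support_eq_cons
  have hDne : w2t.support.dropLast ≠ [] := by
    intro h
    rw [h, List.nil_append] at hD
    rw [hD] at hhead
    simp at hhead
    exact hne hhead.symm
  obtain ⟨ds, hds⟩ : ∃ ds, w2t.support.dropLast = va :: ds := by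
    obtain ⟨d, ds, hd⟩ := List.exists_cons_of_ne_nil hDne
    refine ⟨ds, ?_⟩
    rw [hd] at hD
    rw [hD] at hhead
    simp at hhead
    rw [hd, hhead]
  have hDfull : w2t.support = va :: (ds ++ [vb]) := by
    rw [hD, hds]; rfl
  have htail2 : w2.support.tail = ds ++ [vb] ++ w3.support.tail := by
    rw [hsup2, hDfull]
    simp
  have hLdec2 : L = (A'.filter p ++ va :: ds.filter p) ++ vb :: w3.support.tail.filter p := by
    rw [hLdec1, htail2]
    simp [List.filter_append, hpvb]
    conv_lhs => rw [w3.support_eq_cons]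
    rw [List.filter_cons_of_pos hpvb]
  have hb_eq : b = (A'.filter p ++ va :: ds.filter p).length :=
    index_eq_of_decomp hLdec2 hLnd hb hvb_def.symm
  have hdsne : ds ≠ [] := by
    intro h
    rw [h] at hb_eq
    simp at hb_eq
    omega
  -- w2t has length at least 2
  have hlen2t : 2 ≤ w2t.length := by
    have h1 : w2t.support.length = w2t.length + 1 := w2t.length_support
    rw [hDfull] at h1
    simp at h1
    have : 1 ≤ ds.length := List.length_pos_iff.mpr hdsne
    omega
  -- the shortcut edge
  have hadj : G.Adj va vb := hsplit.2.2.1 va hvaC vb hvbC hne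
  set Q' : G.Walk (X i₀).1 (X i₀).2 := w1.append (Walk.cons hadj w3) with hQ'
  have hQ'sup : Q'.support = w1.support ++ w3.support := by
    rw [hQ', Walk.support_append, Walk.support_cons]
    rfl
  have hdisj12 : w1.support.Disjoint w2.support.tail :=
    List.disjoint_of_nodup_append (hsup ▸ hnd)
  have hsub3 : ∀ x ∈ w3.support, x ∈ w2.support.tail := by
    intro x hx
    rw [w3.support_eq_cons] at hx
    rw [htail2]
    rcases List.mem_cons.mp hx with rfl | hx
    · simp
    · simp [List.mem_of_mem_tail hx]
  have hQ'path : Q'.IsPath := by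
    rw [Walk.isPath_def, hQ'sup]
    refine List.Nodup.append hw1p.support_nodup hw3p.support_nodup ?_
    intro x hx1 hx3
    exact hdisj12 hx1 (hsub3 x hx3)
  have hQ'edges : ∀ e ∈ Q'.edges, e ∈ w.edges ∨ e = s(va, vb) := by
    intro e he
    rw [hQ', Walk.edges_append, Walk.edges_cons] at he
    rcases List.mem_append.mp he with h | h
    · exact Or.inl (w.edges_takeUntil_subset hvaS h)
    · rcases List.mem_cons.mp h with rfl | h
      · exact Or.inr rfl
      · exact Or.inl (w.edges_dropUntil_subset hvaS (w2.edges_dropUntil_subset hvbS h))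
  have hQ'len : Q'.length < w.length := by
    have h1 : w.length = w1.length + w2.length := by
      rw [← hspec, Walk.length_append]
    have h2 : w2.length = w2t.length + w3.length := by
      rw [← hspec2, Walk.length_append]
    have h3 : Q'.length = w1.length + (w3.length + 1) := by
      rw [hQ', Walk.length_append, Walk.length_cons]
    omega
  set Q : WalkFamily G X := Function.update P i₀ Q' with hQdef
  have hQi₀ : Q i₀ = Q' := Function.update_self _ _ _
  have hQj : ∀ j, j ≠ i₀ → Q j = P j := fun j hj => Function.update_of_ne hj _ _
  have hedge_eq : s(va, vb) = Sym2.mk (L[a]'(by omega)) (L[b]'hb) := rfl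
  have hQsol : IsEDPSolution G X Q := by
    constructor
    · intro i
      by_cases h : i = i₀
      · subst h; rw [hQi₀]; exact hQ'path
      · rw [hQj i h]; exact hP.1.1 i
    · intro i j hij e hei
      by_cases hi : i = i₀
      · subst hi
        rw [hQi₀] at hei
        rw [hQj j (Ne.symm hij)]
        rcases hQ'edges e hei with h | rfl
        · exact hP.1.2 i j hij e h
        · rw [hedge_eq]; exact hcon j (Ne.symm hij)
      · rw [hQj i hi] at hei
        by_cases hj : j = i₀
        · subst hj
          rw [hQi₀]
          intro hej
          rcases hQ'edges e hej with h | hh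
          · exact hP.1.2 i j hij e hei h
          · subst hh
            rw [hedge_eq] at hei
            exact hcon i hi hei
        · rw [hQj j hj]; exact hP.1.2 i j hij e hei
  have hle := hP.2 Q hQsol
  have hlt : ∑ i, (Q i).length < ∑ i, (P i).length := by
    apply Finset.sum_lt_sum
    · intro i _
      by_cases h : i = i₀
      · subst h; rw [hQi₀]; exact le_of_lt hQ'len
      · rw [hQj i h]
    · exact ⟨i₀, Finset.mem_univ _, by rw [hQi₀]; exact hQ'len⟩
  omega
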